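/- Let P be a finite poset, k a field, and Q a full subposet of P with inclusion ι : Q ↪ P. For every interval I of Q, one has Θ(k_I) ≅ k_{conv(I)}, where conv(I) = {x ∈ P : a ≤ x ≤ b for some a, b ∈ I} is the convex hull of I in P (which is an interval of P). In particular, Θ sends interval modules over Q to interval modules over P. -/

import Mathlib

open CategoryTheory CategoryTheory.Limits

attribute [local instance] CategoryTheory.Limits.HasFiniteBiproducts.of_hasFiniteProducts

section Posets

variable {P : Type} [PartialOrder P]

/-- Zigzag connectivity of two elements of a subset `S` of a poset: they are linked by a
zigzag of comparable pairs inside `S`. -/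
def ZigzagConnIn (S : Set P) (a b : S) : Prop :=
  Relation.ReflTransGen (fun u v : S => (u : P) ≤ v ∨ (v : P) ≤ u) a b

/-- A subset of a poset is convex if `x ≤ z ≤ y` with `x, y` in the subset implies `z` is. -/
def IsConvex (S : Set P) : Prop :=
  ∀ ⦃x y z : P⦄, x ∈ S → y ∈ S → x ≤ z → z ≤ y → z ∈ S

/-- An interval of a poset: a nonempty, convex, zigzag-connected subset. -/
def IsIntervalSet (S : Set P) : Prop :=
  S.Nonempty ∧ IsConvex S ∧ ∀ a b : S, ZigzagConnIn S a b

end Posets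

section IntervalModules

variable (k : Type) [Field k] {P : Type} [PartialOrder P]

open Classical in
/-- The linear map between the fibers of the interval module. -/
noncomputable def intervalModuleAux (S : Set P) (p q : P) :
    ↥(if p ∈ S then (⊤ : Submodule k k) else ⊥) →ₗ[k]
      ↥(if q ∈ S then (⊤ : Submodule k k) else ⊥) where
  toFun x := ⟨(if p ∈ S ∧ q ∈ S then (1 : k) else 0) * x.1, by
    by_cases hq : q ∈ S
    · rw [if_pos hq]; exact Submodule.mem_top
    · rw [if_neg hq, if_neg (fun h => hq h.2), zero_mul]; exact Submodule.zero_mem _⟩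
  map_add' x y := by ext; simp [mul_add]
  map_smul' c x := by ext; simp

open Classical in
/-- The interval module `k_S` associated to a convex subset `S` of a poset `P`:
it is `k` at points of `S`, `0` elsewhere, with identity structure maps inside `S`. -/
noncomputable def intervalModule (S : Set P) (hS : IsConvex S) : P ⥤ ModuleCat.{0} k where
  obj p := ModuleCat.of k ↥(if p ∈ S then (⊤ : Submodule k k) else ⊥)
  map {p q} _ := ModuleCat.ofHom (intervalModuleAux k S p q)
  map_id p := by
    apply ModuleCat.hom_ext
    apply LinearMap.ext
    rintro ⟨x, hx⟩
    apply Subtype.ext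
    show (if p ∈ S ∧ p ∈ S then (1 : k) else 0) * x = x
    by_cases hp : p ∈ S
    · simp [hp]
    · rw [if_neg hp] at hx
      simp [hp, (Submodule.mem_bot k).mp hx]
  map_comp {p q r} f g := by
    apply ModuleCat.hom_ext
    apply LinearMap.ext
    rintro ⟨x, hx⟩
    apply Subtype.ext
    show (if p ∈ S ∧ r ∈ S then (1 : k) else 0) * x
      = (if q ∈ S ∧ r ∈ S then (1 : k) else 0) * ((if p ∈ S ∧ q ∈ S then (1 : k) else 0) * x)
    by_cases hp : p ∈ S
    · by_cases hr : r ∈ S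
      · have hq : q ∈ S := hS hp hr (leOfHom f) (leOfHom g)
        simp [hp, hq, hr]
      · simp [hr]
    · rw [if_neg hp] at hx
      simp [(Submodule.mem_bot k).mp hx]

/-- A persistence module is an interval module if it is isomorphic to `k_S` for some
interval `S`. -/
def IsIntervalModule (M : P ⥤ ModuleCat.{0} k) : Prop :=
  ∃ (S : Set P) (hS : IsIntervalSet S), Nonempty (M ≅ intervalModule k S hS.2.1)

/-- A persistence module is interval-decomposable if it is isomorphic to a finite direct sum
of interval modules. -/
def IsIntervalDecomposable (M : P ⥤ ModuleCat.{0} k) : Prop :=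
  ∃ (n : ℕ) (J : Fin n → (P ⥤ ModuleCat.{0} k)),
    (∀ i, IsIntervalModule k (J i)) ∧ Nonempty (M ≅ ⨁ J)

/-- The support of a persistence module. -/
def moduleSupport (M : P ⥤ ModuleCat.{0} k) : Set P := {p : P | ¬ IsZero (M.obj p)}

/-- A persistence module valued in finite-dimensional vector spaces. -/
def PointwiseFinite (M : P ⥤ ModuleCat.{0} k) : Prop :=
  ∀ p : P, FiniteDimensional k (M.obj p)

end IntervalModules

section Approximations

variable {C : Type*} [Category C]

/-- `f : X ⟶ M` is a right `𝒳`-approximation of `M` if `X ∈ 𝒳` and every morphism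
from an object of `𝒳` to `M` factors through `f`. -/
def IsRightApproximation (𝒳 : C → Prop) {X M : C} (f : X ⟶ M) : Prop :=
  𝒳 X ∧ ∀ ⦃Y : C⦄ (g : Y ⟶ M), 𝒳 Y → ∃ h : Y ⟶ X, h ≫ f = g

/-- `f : X ⟶ M` is right minimal if every endomorphism `g` of `X` with `f ∘ g = f`
is an isomorphism. -/
def IsRightMinimal {X M : C} (f : X ⟶ M) : Prop :=
  ∀ g : X ⟶ X, g ≫ f = f → IsIso g

end Approximations

/-- An interval cover: a right minimal approximation by interval-decomposable modules. -/
def IsIntervalCover (k : Type) [Field k] {P : Type} [PartialOrder P]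
    {X M : P ⥤ ModuleCat.{0} k} (f : X ⟶ M) : Prop :=
  IsRightApproximation (IsIntervalDecomposable k) f ∧ IsRightMinimal f

section Resolutions

variable {C : Type*} [Category C] [Limits.HasZeroMorphisms C]

/-- `M` admits a resolution `0 ⟶ J_n ⟶ ⋯ ⟶ J_1 ⟶ J_0 ⟶ M ⟶ 0` of length `n` by objects
of `𝒳`: an exact sequence in which every `J_i` lies in `𝒳`.  (The data is encoded by an
`ℕ`-indexed complex which vanishes in degrees `> n` and is exact everywhere.) -/
def HasResolutionOfLength (𝒳 : C → Prop) (n : ℕ) (M : C) : Prop :=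
  ∃ (J : ℕ → C) (d : ∀ i, J (i + 1) ⟶ J i) (f : J 0 ⟶ M) (w0 : d 0 ≫ f = 0)
    (w : ∀ i, d (i + 1) ≫ d i = 0),
    (∀ i, i ≤ n → 𝒳 (J i)) ∧ (∀ i, n < i → IsZero (J i)) ∧
    Epi f ∧ (ShortComplex.mk (d 0) f w0).Exact ∧
    ∀ i, (ShortComplex.mk (d (i + 1)) (d i) (w i)).Exact

end Resolutions

section KanTheta

variable (k : Type) [Field k] {P : Type} [PartialOrder P] (Q : Set P)

/-- The restriction functor along the inclusion `ι : Q ↪ P` of a full subposet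
(precomposition with `ι`). -/
noncomputable def resFunctor : (P ⥤ ModuleCat.{0} k) ⥤ (↥Q ⥤ ModuleCat.{0} k) :=
  (CategoryTheory.Functor.whiskeringLeft _ _ _).obj (Subtype.mono_coe (· ∈ Q)).functor

variable (L R : (↥Q ⥤ ModuleCat.{0} k) ⥤ (P ⥤ ModuleCat.{0} k))
variable (adjL : L ⊣ resFunctor k Q) (adjR : resFunctor k Q ⊣ R)

/-- The canonical morphism `θ_M : Lan(M) ⟶ Ran(M)` corresponding to the identity of `M`
under the adjunction isomorphisms
`Hom(Lan M, Ran M) ≅ Hom(M, Res (Ran M)) ≅ Hom(M, M)`. -/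
noncomputable def thetaHom [IsIso adjR.counit] (M : ↥Q ⥤ ModuleCat.{0} k) :
    L.obj M ⟶ R.obj M :=
  (adjL.homEquiv M (R.obj M)).symm ((asIso adjR.counit).inv.app M)

lemma thetaHom_naturality [IsIso adjR.counit] {M N : ↥Q ⥤ ModuleCat.{0} k} (f : M ⟶ N) :
    L.map f ≫ thetaHom k Q L R adjL adjR N = thetaHom k Q L R adjL adjR M ≫ R.map f := by
  dsimp [thetaHom]
  rw [← Adjunction.homEquiv_naturality_left_symm, ← Adjunction.homEquiv_naturality_right_symm]
  congr 1
  simpa using ((asIso adjR.counit).inv.naturality f)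

/-- The functor `Θ`, sending `M` to the image of `θ_M : Lan(M) ⟶ Ran(M)`. -/
noncomputable def Theta [IsIso adjR.counit] :
    (↥Q ⥤ ModuleCat.{0} k) ⥤ (P ⥤ ModuleCat.{0} k) where
  obj M := image (thetaHom k Q L R adjL adjR M)
  map {M N} f := image.map (Arrow.homMk' _ _ (thetaHom_naturality k Q L R adjL adjR f))
  map_id M := by
    have h : Arrow.homMk' _ _ (thetaHom_naturality k Q L R adjL adjR (𝟙 M)) =
        𝟙 (Arrow.mk (thetaHom k Q L R adjL adjR M)) :=
      Arrow.hom_ext _ _ (by simp) (by simp)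
    show image.map (Arrow.homMk' _ _ (thetaHom_naturality k Q L R adjL adjR (𝟙 M))) =
      𝟙 (image (thetaHom k Q L R adjL adjR M))
    rw [h, image.map_id]
    rfl
  map_comp {M N O} f g := by
    have h : Arrow.homMk' _ _ (thetaHom_naturality k Q L R adjL adjR (f ≫ g)) =
        Arrow.homMk' _ _ (thetaHom_naturality k Q L R adjL adjR f) ≫
          Arrow.homMk' _ _ (thetaHom_naturality k Q L R adjL adjR g) :=
      Arrow.hom_ext _ _ (by simp) (by simp)
    show image.map (Arrow.homMk' _ _ (thetaHom_naturality k Q L R adjL adjR (f ≫ g))) =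
      image.map (Arrow.homMk' _ _ (thetaHom_naturality k Q L R adjL adjR f)) ≫
        image.map (Arrow.homMk' _ _ (thetaHom_naturality k Q L R adjL adjR g))
    rw [h, image.map_comp]

end KanTheta

section ConvexHull

variable {P : Type} [PartialOrder P]

/-- The convex hull in `P` of a subset `I` of a full subposet `Q ⊆ P`:
`conv(I) = {x ∈ P : a ≤ x ≤ b for some a, b ∈ I}`. -/
def convexHullIn (Q : Set P) (I : Set ↥Q) : Set P :=
  {x : P | ∃ a ∈ I, ∃ b ∈ I, (a : P) ≤ x ∧ x ≤ (b : P)}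

lemma convexHullIn_isConvex (Q : Set P) (I : Set ↥Q) : IsConvex (convexHullIn Q I) := by
  rintro x y z ⟨a, ha, b, hb, hax, hxb⟩ ⟨a', ha', b', hb', ha'y, hyb'⟩ hxz hzy
  exact ⟨a, ha, b', hb', hax.trans hxz, hzy.trans hyb'⟩

end ConvexHull

section MyAux

open CategoryTheory CategoryTheory.Limits

variable (k : Type) [Field k] {P : Type} [PartialOrder P] (Q : Set P)

lemma my_mem_convexHullIn_self {I : Set ↥Q} {q : ↥Q} (hq : q ∈ I) :
    (q : P) ∈ convexHullIn Q I :=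
  ⟨q, hq, q, hq, le_rfl, le_rfl⟩

lemma my_mem_convexHullIn_iff {I : Set ↥Q} (hc : IsConvex I) {q : ↥Q} :
    q ∈ I ↔ (q : P) ∈ convexHullIn Q I := by
  constructor
  · exact my_mem_convexHullIn_self Q
  · rintro ⟨a, ha, b, hb, h1, h2⟩
    exact hc ha hb (Subtype.coe_le_coe.mp h1) (Subtype.coe_le_coe.mp h2)

lemma my_convexHullIn_isIntervalSet {I : Set ↥Q} (hI : IsIntervalSet I) :
    IsIntervalSet (convexHullIn Q I) := by
  obtain ⟨⟨q0, hq0⟩, hconv, hconn⟩ := hI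
  refine ⟨⟨q0, my_mem_convexHullIn_self Q hq0⟩, convexHullIn_isConvex Q I, ?_⟩
  intro x y
  obtain ⟨a, ha, -, -, hax, -⟩ := x.2
  obtain ⟨a', ha', -, -, ha'y, -⟩ := y.2
  have step1 : ZigzagConnIn (convexHullIn Q I) x ⟨(a : P), my_mem_convexHullIn_self Q ha⟩ :=
    Relation.ReflTransGen.single (Or.inr hax)
  have step3 : ZigzagConnIn (convexHullIn Q I) ⟨(a' : P), my_mem_convexHullIn_self Q ha'⟩ y :=
    Relation.ReflTransGen.single (Or.inl ha'y)
  have step2 : ZigzagConnIn (convexHullIn Q I)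
      ⟨(a : P), my_mem_convexHullIn_self Q ha⟩ ⟨(a' : P), my_mem_convexHullIn_self Q ha'⟩ := by
    have h := hconn ⟨a, ha⟩ ⟨a', ha'⟩
    exact Relation.ReflTransGen.lift
      (fun e : ↥I => (⟨((e : ↥Q) : P), my_mem_convexHullIn_self Q e.2⟩ : ↥(convexHullIn Q I)))
      (fun u v huv => huv.imp Subtype.coe_le_coe.mpr Subtype.coe_le_coe.mpr) _ _ h
  exact (step1.trans step2).trans step3

open Classical in
/-- A generic "identity-like" map between fibers of interval modules. -/
noncomputable def condHom (c₁ c₂ : Prop) :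
    ↥(if c₁ then (⊤ : Submodule k k) else ⊥) →ₗ[k]
      ↥(if c₂ then (⊤ : Submodule k k) else ⊥) where
  toFun x := ⟨(if c₁ ∧ c₂ then (1 : k) else 0) * x.1, by
    by_cases h : c₂
    · rw [if_pos h]; exact Submodule.mem_top
    · rw [if_neg h, if_neg (fun h' => h h'.2), zero_mul]; exact Submodule.zero_mem _⟩
  map_add' x y := by ext; simp [mul_add]
  map_smul' c x := by ext; simp [mul_left_comm]

open Classical in
lemma condHom_apply (c₁ c₂ : Prop) (x) :
    (condHom k c₁ c₂ x : k) = (if c₁ ∧ c₂ then (1 : k) else 0) * (x : k) := rfl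

open Classical in
lemma intervalModuleAux_apply' (S : Set P) (p q : P) (x) :
    (intervalModuleAux k S p q x : k) = (if p ∈ S ∧ q ∈ S then (1 : k) else 0) * (x : k) := rfl

end MyAux

section MyAux2

open CategoryTheory CategoryTheory.Limits

set_option linter.unusedSectionVars false

variable (k : Type) [Field k] {P : Type} [PartialOrder P] (Q : Set P)

open Classical in
noncomputable def alphaHom (I : Set ↥Q) (hc : IsConvex I) :
    intervalModule k I hc ⟶
      (resFunctor k Q).obj
        (intervalModule k (convexHullIn Q I) (convexHullIn_isConvex Q I)) where
  app q := ModuleCat.ofHom (condHom k (q ∈ I) ((q : P) ∈ convexHullIn Q I))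
  naturality {q q'} f := by
    have e1 : ((q : P) ∈ convexHullIn Q I) = (q ∈ I) :=
      propext (my_mem_convexHullIn_iff Q hc).symm
    have e2 : ((q' : P) ∈ convexHullIn Q I) = (q' ∈ I) :=
      propext (my_mem_convexHullIn_iff Q hc).symm
    ext x
    refine Subtype.ext ?_
    show (condHom k (q' ∈ I) ((q' : P) ∈ convexHullIn Q I)
        (intervalModuleAux k I q q' x) : k)
      = (intervalModuleAux k (convexHullIn Q I) (q : P) (q' : P)
        (condHom k (q ∈ I) ((q : P) ∈ convexHullIn Q I) x) : k)
    rw [condHom_apply, intervalModuleAux_apply']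
    show (if q' ∈ I ∧ (q' : P) ∈ convexHullIn Q I then (1 : k) else 0) * ((if q ∈ I ∧ q' ∈ I then (1 : k) else 0) * x.1) = (if (q : P) ∈ convexHullIn Q I ∧ (q' : P) ∈ convexHullIn Q I then (1 : k) else 0) * ((if q ∈ I ∧ (q : P) ∈ convexHullIn Q I then (1 : k) else 0) * x.1)
    simp only [e1, e2]
    by_cases h1 : q ∈ I <;> by_cases h2 : q' ∈ I <;> simp [h1, h2]

open Classical in
noncomputable def betaHom (I : Set ↥Q) (hc : IsConvex I) :
    (resFunctor k Q).obj
        (intervalModule k (convexHullIn Q I) (convexHullIn_isConvex Q I)) ⟶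
      intervalModule k I hc where
  app q := ModuleCat.ofHom (condHom k ((q : P) ∈ convexHullIn Q I) (q ∈ I))
  naturality {q q'} f := by
    have e1 : ((q : P) ∈ convexHullIn Q I) = (q ∈ I) :=
      propext (my_mem_convexHullIn_iff Q hc).symm
    have e2 : ((q' : P) ∈ convexHullIn Q I) = (q' ∈ I) :=
      propext (my_mem_convexHullIn_iff Q hc).symm
    ext x
    refine Subtype.ext ?_
    show (condHom k ((q' : P) ∈ convexHullIn Q I) (q' ∈ I)
        (intervalModuleAux k (convexHullIn Q I) (q : P) (q' : P) x) : k)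
      = (intervalModuleAux k I q q'
        (condHom k ((q : P) ∈ convexHullIn Q I) (q ∈ I) x) : k)
    rw [condHom_apply, intervalModuleAux_apply']
    show (if (q' : P) ∈ convexHullIn Q I ∧ q' ∈ I then (1 : k) else 0) * ((if (q : P) ∈ convexHullIn Q I ∧ (q' : P) ∈ convexHullIn Q I then (1 : k) else 0) * x.1) = (if q ∈ I ∧ q' ∈ I then (1 : k) else 0) * ((if (q : P) ∈ convexHullIn Q I ∧ q ∈ I then (1 : k) else 0) * x.1)
    simp only [e1, e2]
    by_cases h1 : q ∈ I <;> by_cases h2 : q' ∈ I <;> simp [h1, h2]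

open Classical in
lemma alpha_beta (I : Set ↥Q) (hc : IsConvex I) :
    alphaHom k Q I hc ≫ betaHom k Q I hc = 𝟙 (intervalModule k I hc) := by
  ext q x
  refine Subtype.ext ?_
  show (condHom k ((q : P) ∈ convexHullIn Q I) (q ∈ I)
      (condHom k (q ∈ I) ((q : P) ∈ convexHullIn Q I) x) : k) = x.1
  show (if (q : P) ∈ convexHullIn Q I ∧ q ∈ I then (1 : k) else 0) * ((if q ∈ I ∧ (q : P) ∈ convexHullIn Q I then (1 : k) else 0) * x.1) = x.1
  by_cases h : q ∈ I
  · simp [h, my_mem_convexHullIn_self Q h]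
  · obtain ⟨c, hc2⟩ := x
    rw [if_neg h] at hc2
    have hx : c = 0 := (Submodule.mem_bot k).mp hc2
    simp [hx]

end MyAux2

section MyAux3

open CategoryTheory CategoryTheory.Limits

set_option linter.unusedSectionVars false

variable (k : Type) [Field k] {P : Type} [PartialOrder P] (Q : Set P)

open Classical in
lemma intervalModule_map_apply (S : Set P) (hS : IsConvex S) {p q : P} (f : p ⟶ q)
    (x : ↥((intervalModule k S hS).obj p)) :
    ((intervalModule k S hS).map f x).1 = (if p ∈ S ∧ q ∈ S then (1 : k) else 0) * x.1 := rfl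

open Classical in
lemma alphaHom_app_apply (I : Set ↥Q) (hc : IsConvex I) (q : ↥Q)
    (x : ↥((intervalModule k I hc).obj q)) :
    ((alphaHom k Q I hc).app q x).1
      = (if q ∈ I ∧ (q : P) ∈ convexHullIn Q I then (1 : k) else 0) * x.1 := rfl

open Classical in
lemma betaHom_app_apply (I : Set ↥Q) (hc : IsConvex I) (q : ↥Q)
    (x : ↥(((resFunctor k Q).obj
      (intervalModule k (convexHullIn Q I) (convexHullIn_isConvex Q I))).obj q)) :
    ((betaHom k Q I hc).app q x).1
      = (if (q : P) ∈ convexHullIn Q I ∧ q ∈ I then (1 : k) else 0) * x.1 := rfl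

end MyAux3


/-- For every interval `I` of the full subposet `Q` of `P`, the module
`Θ(k_I)` is isomorphic to the interval module on the convex hull `conv(I)` of `I` in `P`;
in particular `conv(I)` is an interval of `P` and `Θ` sends interval modules to interval
modules. -/
theorem Theta_intervalModule
    (k : Type) [Field k] (P : Type) [PartialOrder P] [Finite P] (Q : Set P)
    (L R : (↥Q ⥤ ModuleCat.{0} k) ⥤ (P ⥤ ModuleCat.{0} k))
    (adjL : L ⊣ resFunctor k Q) (adjR : resFunctor k Q ⊣ R)
    [IsIso adjL.unit] [IsIso adjR.counit]
    (I : Set ↥Q) (hI : IsIntervalSet I) :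
    Nonempty ((Theta k Q L R adjL adjR).obj (intervalModule k I hI.2.1) ≅
      intervalModule k (convexHullIn Q I) (convexHullIn_isConvex Q I)) ∧
    IsIntervalSet (convexHullIn Q I) ∧
    IsIntervalModule k ((Theta k Q L R adjL adjR).obj (intervalModule k I hI.2.1)) := by
  classical
  set M : ↥Q ⥤ ModuleCat.{0} k := intervalModule k I hI.2.1 with hMdef
  set Km : P ⥤ ModuleCat.{0} k :=
    intervalModule k (convexHullIn Q I) (convexHullIn_isConvex Q I) with hKmdef
  set α : M ⟶ (resFunctor k Q).obj Km := alphaHom k Q I hI.2.1 with hαdef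
  set β : (resFunctor k Q).obj Km ⟶ M := betaHom k Q I hI.2.1 with hβdef
  set φ : L.obj M ⟶ Km := (adjL.homEquiv M Km).symm α with hφdef
  set ψ : Km ⟶ R.obj M := adjR.homEquiv Km M β with hψdef
  have halphabeta : α ≫ β = 𝟙 M := by
    rw [hαdef, hβdef]; exact alpha_beta k Q I hI.2.1
  have hψβ : (resFunctor k Q).map ψ ≫ adjR.counit.app M = β :=
    (Adjunction.homEquiv_counit adjR Km M ψ).symm.trans
      (by rw [hψdef]; exact (adjR.homEquiv Km M).symm_apply_apply β)
  have hφα : adjL.unit.app M ≫ (resFunctor k Q).map φ = α :=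
    (Adjunction.homEquiv_unit adjL M Km φ).symm.trans
      (by rw [hφdef]; exact (adjL.homEquiv M Km).apply_symm_apply α)
  -- the factorization equation
  have hcomm : α ≫ (resFunctor k Q).map ψ = (asIso adjR.counit).inv.app M := by
    haveI : IsIso (adjR.counit.app M) := inferInstance
    rw [← cancel_mono (adjR.counit.app M), Category.assoc, hψβ, halphabeta]
    have h2 : (asIso adjR.counit).inv.app M ≫ adjR.counit.app M = 𝟙 M := by
      simpa using NatTrans.congr_app (asIso adjR.counit).inv_hom_id M
    rw [h2]
  have hθ : φ ≫ ψ = thetaHom k Q L R adjL adjR M := by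
    have h1 : φ ≫ ψ = (adjL.homEquiv M (R.obj M)).symm (α ≫ (resFunctor k Q).map ψ) := by
      rw [hφdef]
      exact (Adjunction.homEquiv_naturality_right_symm adjL α ψ).symm
    rw [h1, hcomm]
    rfl
  -- surjectivity of φ pointwise
  have hsurj : ∀ p : P, Function.Surjective (φ.app p) := by
    intro p
    by_cases hp : p ∈ convexHullIn Q I
    · have hp' := hp
      obtain ⟨a, ha, b, hb, hap, hpb⟩ := hp'
      have hac : (a : P) ∈ convexHullIn Q I := my_mem_convexHullIn_self Q ha
      have hone : (1 : k) ∈ (if a ∈ I then (⊤ : Submodule k k) else ⊥) := by simp [ha]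
      set x1 : ↥(M.obj a) := ⟨1, hone⟩ with hx1def
      set z : ↥((L.obj M).obj p) :=
        (L.obj M).map (homOfLE hap) ((adjL.unit.app M).app a x1) with hzdef
      have hstep1 : φ.app ((a : ↥Q) : P) ((adjL.unit.app M).app a x1) = α.app a x1 := by
        have h2 : (adjL.unit.app M).app a ≫ ((resFunctor k Q).map φ).app a = α.app a := by
          rw [← NatTrans.comp_app, hφα]
        exact LinearMap.congr_fun (congrArg ModuleCat.Hom.hom h2) x1
      have hstep2 : φ.app p z
          = Km.map (homOfLE hap) (φ.app ((a : ↥Q) : P) ((adjL.unit.app M).app a x1)) :=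
        LinearMap.congr_fun (congrArg ModuleCat.Hom.hom (φ.naturality (homOfLE hap))) ((adjL.unit.app M).app a x1)
      have hval : (φ.app p z).1 = 1 := by
        rw [hstep2, hstep1]
        show ((intervalModule k (convexHullIn Q I) (convexHullIn_isConvex Q I)).map
            (homOfLE hap) ((alphaHom k Q I hI.2.1).app a x1)).1 = 1
        show (if ((a : ↥Q) : P) ∈ convexHullIn Q I ∧ p ∈ convexHullIn Q I then (1 : k) else 0) * ((if a ∈ I ∧ ((a : ↥Q) : P) ∈ convexHullIn Q I then (1 : k) else 0) * x1.1) = 1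
        simp [hx1def, ha, hac, hp]
      intro y
      refine ⟨y.1 • z, Subtype.ext ?_⟩
      rw [map_smul]
      have hsm : (y.1 • φ.app p z).1 = y.1 * (φ.app p z).1 := rfl
      rw [hsm, hval, mul_one]
    · intro y
      obtain ⟨c, hc2⟩ := y
      rw [if_neg hp] at hc2
      refine ⟨0, Subtype.ext ?_⟩
      rw [map_zero]
      show (0 : k) = c
      symm; exact (Submodule.mem_bot k).mp hc2
  -- injectivity of ψ pointwise
  have hinj : ∀ p : P, Function.Injective (ψ.app p) := by
    intro p
    by_cases hp : p ∈ convexHullIn Q I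
    · have hp' := hp
      obtain ⟨a, ha, b, hb, hap, hpb⟩ := hp'
      have hbc : (b : P) ∈ convexHullIn Q I := my_mem_convexHullIn_self Q hb
      have hkey : ∀ x : ↥(Km.obj p), ψ.app p x = 0 → x = 0 := by
        intro x hx
        set y : ↥(Km.obj ((b : ↥Q) : P)) := Km.map (homOfLE hpb) x with hydef
        have hnat : ψ.app ((b : ↥Q) : P) y = (R.obj M).map (homOfLE hpb) (ψ.app p x) :=
          LinearMap.congr_fun (congrArg ModuleCat.Hom.hom (ψ.naturality (homOfLE hpb))) x
        have hz : ψ.app ((b : ↥Q) : P) y = 0 := by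
          rw [hnat, hx, map_zero]
        have h2 : ((resFunctor k Q).map ψ).app b ≫ (adjR.counit.app M).app b = β.app b := by
          rw [← NatTrans.comp_app, hψβ]
        have hβval : (adjR.counit.app M).app b (ψ.app ((b : ↥Q) : P) y) = β.app b y :=
          LinearMap.congr_fun (congrArg ModuleCat.Hom.hom h2) y
        have hβ0 : (β.app b y).1 = 0 := by
          rw [← hβval, hz]
          exact congrArg Subtype.val (map_zero (ConcreteCategory.hom ((adjR.counit.app M).app b)))
        have hval : (β.app b y).1 = x.1 := by
          rw [hβdef]
          show (if ((b : ↥Q) : P) ∈ convexHullIn Q I ∧ b ∈ I then (1 : k) else 0) *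
              ((intervalModule k (convexHullIn Q I) (convexHullIn_isConvex Q I)).map
                (homOfLE hpb) x).1 = x.1
          show (if ((b : ↥Q) : P) ∈ convexHullIn Q I ∧ b ∈ I then (1 : k) else 0) * ((if p ∈ convexHullIn Q I ∧ ((b : ↥Q) : P) ∈ convexHullIn Q I then (1 : k) else 0) * x.1) = x.1
          simp [hb, hbc, hp]
        exact Subtype.ext (by rw [← hval, hβ0]; rfl)
      intro x y hxy
      have h0 := hkey (x - y) (by rw [map_sub, hxy, sub_self])
      exact sub_eq_zero.mp h0
    · intro x y _
      obtain ⟨c, hc2⟩ := x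
      obtain ⟨d, hd2⟩ := y
      rw [if_neg hp] at hc2 hd2
      refine Subtype.ext ?_
      show c = d
      rw [(Submodule.mem_bot k).mp hc2, (Submodule.mem_bot k).mp hd2]
  haveI : ∀ p : P, Epi (φ.app p) := fun p => (ModuleCat.epi_iff_surjective _).mpr (hsurj p)
  haveI : Epi φ := NatTrans.epi_of_epi_app φ
  haveI : ∀ p : P, Mono (ψ.app p) := fun p => (ModuleCat.mono_iff_injective _).mpr (hinj p)
  haveI : Mono ψ := NatTrans.mono_of_mono_app ψ
  haveI : StrongEpi φ := strongEpi_of_epi φ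
  let iso : Km ≅ image (thetaHom k Q L R adjL adjR M) := image.isoStrongEpiMono φ ψ hθ
  exact ⟨⟨iso.symm⟩, my_convexHullIn_isIntervalSet Q hI,
    ⟨convexHullIn Q I, my_convexHullIn_isIntervalSet Q hI, ⟨iso.symm⟩⟩⟩
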